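/- Let T̂ ⊆ {1,…,p} satisfy |T̂| ≤ 2s* and ‖(I − Φ_{T̂})Xθ‖² ≤ c s* log p, and assume ‖ε‖² ≤ 2n and event E_n holds. Then for every S ⊆ {1,…,p}: log(π(S)/π(T̂)) ≤ −D(|S| − 2s*) log p + (4s* + 2c s* log p + 2|S| L log p)/β. -/

import Mathlib

open scoped BigOperators
open Finset
open scoped RealInnerProductSpace
set_option maxHeartbeats 1000000

noncomputable section

/-- Span of the columns `X j`, `j ∈ S`. -/
def colSpan {n p : ℕ} (X : Fin p → EuclideanSpace ℝ (Fin n)) (S : Finset (Fin p)) :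
    Submodule ℝ (EuclideanSpace ℝ (Fin n)) :=
  Submodule.span ℝ (X '' ↑S)

/-- `Φ_S`, the orthogonal projection of ℝ^n onto the span of the columns in `S`. -/
noncomputable def proj {n p : ℕ} (X : Fin p → EuclideanSpace ℝ (Fin n)) (S : Finset (Fin p)) :
    EuclideanSpace ℝ (Fin n) →ₗ[ℝ] EuclideanSpace ℝ (Fin n) :=
  (colSpan X S).subtype ∘ₗ ((colSpan X S).orthogonalProjection).toLinearMap

/-- Restricted eigenvalue condition: `‖X_S w‖² ≥ n ν ‖w‖²` for all `S` with `|S| ≤ m`. -/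
def RECond {n p : ℕ} (X : Fin p → EuclideanSpace ℝ (Fin n)) (ν : ℝ) (m : ℕ) : Prop :=
  ∀ S : Finset (Fin p), S.card ≤ m → ∀ w : Fin p → ℝ,
    (n : ℝ) * ν * ∑ j ∈ S, w j ^ 2 ≤ ‖∑ j ∈ S, w j • X j‖ ^ 2

/-- The unnormalized weight exp(G(S,Y) − m(S)), where G(S,Y) = ‖Φ_S Y‖²/β and
m(S) = D|S| log p + (2/β) trace(Φ_S) + (4n/β) 1{|S| > 4s}. -/
noncomputable def postWt {n p : ℕ} (X : Fin p → EuclideanSpace ℝ (Fin n))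
    (Y : EuclideanSpace ℝ (Fin n)) (β D : ℝ) (s : ℕ) (S : Finset (Fin p)) : ℝ :=
  Real.exp (‖proj X S Y‖ ^ 2 / β -
    (D * S.card * Real.log p +
      2 * LinearMap.trace ℝ (EuclideanSpace ℝ (Fin n)) (proj X S) / β +
      if 4 * s < S.card then 4 * n / β else 0))

/-- The probability distribution π(S) ∝ exp(G(S,Y) − m(S)) on subsets of {1,…,p}. -/
noncomputable def postPi {n p : ℕ} (X : Fin p → EuclideanSpace ℝ (Fin n))
    (Y : EuclideanSpace ℝ (Fin n)) (β D : ℝ) (s : ℕ) (S : Finset (Fin p)) : ℝ :=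
  postWt X Y β D s S / ∑ S' : Finset (Fin p), postWt X Y β D s S'
variable {n p : ℕ} {X : Fin p → EuclideanSpace ℝ (Fin n)}

lemma proj_apply (S : Finset (Fin p)) (v : EuclideanSpace ℝ (Fin n)) :
    proj X S v = ↑((colSpan X S).orthogonalProjectionOnto v) := rfl

lemma proj_mem (S : Finset (Fin p)) (v : EuclideanSpace ℝ (Fin n)) :
    proj X S v ∈ colSpan X S := ((colSpan X S).orthogonalProjectionOnto v).2

lemma proj_eq_self {S : Finset (Fin p)} {v : EuclideanSpace ℝ (Fin n)}
    (h : v ∈ colSpan X S) : proj X S v = v := by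
  rw [proj_apply, ← Submodule.starProjection_apply, Submodule.starProjection_eq_self_iff.2 h]

lemma proj_eq_zero {S : Finset (Fin p)} {v : EuclideanSpace ℝ (Fin n)}
    (h : v ∈ (colSpan X S)ᗮ) : proj X S v = 0 := by
  rw [proj_apply, Submodule.orthogonalProjectionOnto_apply_of_mem_orthogonal h,
    Submodule.coe_zero]

lemma inner_proj_left (S : Finset (Fin p)) (v w : EuclideanSpace ℝ (Fin n)) :
    ⟪proj X S v, w⟫ = ⟪v, proj X S w⟫ :=
  Submodule.inner_starProjection_left_eq_right (colSpan X S) v w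

lemma sub_proj_mem_orthogonal (S : Finset (Fin p)) (v : EuclideanSpace ℝ (Fin n)) :
    v - proj X S v ∈ (colSpan X S)ᗮ :=
  Submodule.sub_starProjection_mem_orthogonal v

lemma isProj_proj (S : Finset (Fin p)) : LinearMap.IsProj (colSpan X S) (proj X S) :=
  ⟨proj_mem S, fun _ h => proj_eq_self h⟩

lemma trace_proj (S : Finset (Fin p)) :
    LinearMap.trace ℝ (EuclideanSpace ℝ (Fin n)) (proj X S)
      = (Module.finrank ℝ (colSpan X S) : ℝ) :=
  (isProj_proj S).trace

lemma finrank_colSpan_le (S : Finset (Fin p)) :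
    Module.finrank ℝ (colSpan X S) ≤ S.card := by
  classical
  rw [colSpan, ← Finset.coe_image]
  exact le_trans (finrank_span_finset_le_card _) Finset.card_image_le

lemma colSpan_mono {S U : Finset (Fin p)} (h : S ⊆ U) : colSpan X S ≤ colSpan X U :=
  Submodule.span_mono (Set.image_mono h)

lemma pyth (S : Finset (Fin p)) (v : EuclideanSpace ℝ (Fin n)) :
    ‖v‖ ^ 2 = ‖proj X S v‖ ^ 2 + ‖v - proj X S v‖ ^ 2 := by
  have h0 : ⟪proj X S v, v - proj X S v⟫ = 0 :=
    (Submodule.mem_orthogonal _ _).1 (sub_proj_mem_orthogonal S v) _ (proj_mem S v)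
  have := norm_add_sq_real (proj X S v) (v - proj X S v)
  simp only [add_sub_cancel, h0] at this
  linarith

lemma norm_proj_le (S : Finset (Fin p)) (v : EuclideanSpace ℝ (Fin n)) :
    ‖proj X S v‖ ≤ ‖v‖ := by
  have := pyth (X := X) S v
  nlinarith [sq_nonneg ‖v - proj X S v‖, norm_nonneg (proj X S v), norm_nonneg v]

lemma norm_proj_mono {S U : Finset (Fin p)} (h : S ⊆ U) (v : EuclideanSpace ℝ (Fin n)) :
    ‖proj X S v‖ ≤ ‖proj X U v‖ := by
  have h1 : ⟪proj X S v, proj X S v⟫ = ⟪proj X S v, v⟫ := by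
    rw [inner_proj_left S v (proj X S v), proj_eq_self (proj_mem S v)]
    exact real_inner_comm _ _
  have h2 : ⟪proj X S v, v⟫ = ⟪proj X S v, proj X U v⟫ := by
    have hm : proj X S v ∈ colSpan X U := colSpan_mono h (proj_mem S v)
    have h0 : ⟪proj X S v, v - proj X U v⟫ = 0 :=
      (Submodule.mem_orthogonal _ _).1 (sub_proj_mem_orthogonal U v) _ hm
    have := inner_sub_right (𝕜 := ℝ) (proj X S v) v (proj X U v)
    rw [h0] at this
    linarith
  have h3 : ‖proj X S v‖ ^ 2 ≤ ‖proj X S v‖ * ‖proj X U v‖ := by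
    calc ‖proj X S v‖ ^ 2 = ⟪proj X S v, proj X S v⟫ := (real_inner_self_eq_norm_sq _).symm
    _ = ⟪proj X S v, proj X U v⟫ := by rw [h1, h2]
    _ ≤ ‖proj X S v‖ * ‖proj X U v‖ := real_inner_le_norm _ _
  rcases eq_or_lt_of_le (norm_nonneg (proj X S v)) with h4 | h4
  · rw [← h4]; exact norm_nonneg _
  · nlinarith


lemma sqrt_add_sq_le {a b : ℝ} (ha : 0 ≤ a) (hb : 0 ≤ b) :
    (Real.sqrt a + Real.sqrt b)^2 ≤ 2*a + 2*b := by
  nlinarith [Real.sq_sqrt ha, Real.sq_sqrt hb, sq_nonneg (Real.sqrt a - Real.sqrt b)]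

lemma key2 {n p s : ℕ} {X : Fin p → EuclideanSpace ℝ (Fin n)} {ν : ℝ}
    (hν : 0 < ν) (hn : 0 < n) (hp : 2 ≤ p) (hRE : RECond X ν (6*s))
    {θ : Fin p → ℝ} {ε Y : EuclideanSpace ℝ (Fin n)} (hY : Y = (∑ j, θ j • X j) + ε)
    {c L : ℝ} (hc : 0 < c) (hL : 0 < L)
    {That : Finset (Fin p)} (hThatcard : That.card ≤ 2*s)
    (hThatrisk : ‖(∑ j, θ j • X j) - proj X That (∑ j, θ j • X j)‖^2 ≤ c*s*Real.log p)
    (hE : ∀ S : Finset (Fin p), S.card < 6*s → ∀ j ∉ S,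
      (inner ℝ (X j - proj X S (X j)) ε : ℝ)^2 ≤ (n:ℝ)*L*ν*Real.log p)
    (hs : 0 < s)
    {S : Finset (Fin p)} (hS4 : S.card ≤ 4*s) :
    ‖proj X S Y‖^2 ≤ ‖proj X That Y‖^2 + 2*c*(s:ℝ)*Real.log p
      + 2*(S.card:ℝ)*L*Real.log p := by
  classical
  have hlogp : (0:ℝ) ≤ Real.log p :=
    Real.log_nonneg (by exact_mod_cast Nat.one_le_of_lt hp)
  set U := S ∪ That with hU
  have hTU : That ⊆ U := Finset.subset_union_right
  have hSU : S ⊆ U := Finset.subset_union_left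
  have hUcard : U.card ≤ 6*s :=
    le_trans (Finset.card_union_le _ _) (by omega)
  set v := proj X U Y - proj X That Y with hv
  have hPTv : proj X That v = 0 := by
    have h1 : proj X That (Y - proj X U Y) = 0 :=
      proj_eq_zero (Submodule.orthogonal_le (colSpan_mono hTU) (sub_proj_mem_orthogonal U Y))
    have h2 : proj X That (proj X U Y) = proj X That Y := by
      have h3 := map_sub (proj X That) Y (proj X U Y)
      rw [h1] at h3
      exact (sub_eq_zero.mp h3.symm).symm
    rw [hv, map_sub, h2, proj_eq_self (proj_mem That Y), sub_self]
  have hinner0 : ⟪proj X That Y, v⟫ = 0 := by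
    rw [inner_proj_left, hPTv, inner_zero_right]
  have hsplit : ‖proj X U Y‖^2 = ‖proj X That Y‖^2 + ‖v‖^2 := by
    have h3 : proj X U Y = proj X That Y + v := by rw [hv]; abel
    rw [h3, norm_add_sq_real, hinner0]; ring
  have hvU : v ∈ colSpan X U :=
    Submodule.sub_mem _ (proj_mem U Y) (colSpan_mono hTU (proj_mem That Y))
  have hvY : ‖v‖^2 = ⟪v, Y⟫ := by
    have e1 : ⟪v, proj X U Y⟫ = ⟪v, Y⟫ := by
      rw [← inner_proj_left U v Y, proj_eq_self hvU]
    have e2 : ⟪v, proj X That Y⟫ = 0 := by rw [real_inner_comm]; exact hinner0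
    calc ‖v‖^2 = ⟪v, v⟫ := (real_inner_self_eq_norm_sq v).symm
    _ = ⟪v, proj X U Y - proj X That Y⟫ := by rw [← hv]
    _ = ⟪v, proj X U Y⟫ - ⟪v, proj X That Y⟫ := inner_sub_right _ _ _
    _ = ⟪v, Y⟫ := by rw [e1, e2, sub_zero]
  -- representation of v over U
  obtain ⟨l, hlsupp, hlv⟩ := (Finsupp.mem_span_image_iff_linearCombination ℝ).1 hvU
  have hlsub : l.support ⊆ U := by exact_mod_cast (Finsupp.mem_supported ℝ _).1 hlsupp
  have hvrep : ∑ j ∈ U, l j • X j = v := by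
    rw [← hlv, Finsupp.linearCombination_apply, Finsupp.sum]
    exact (Finset.sum_subset hlsub (fun j _ hj => by
      rw [Finsupp.notMem_support_iff.1 hj, zero_smul])).symm
  have hXmem : ∀ j ∈ That, X j ∈ colSpan X That :=
    fun j hj => Submodule.subset_span ⟨j, hj, rfl⟩
  have h7 : v = ∑ j ∈ U \ That, l j • (X j - proj X That (X j)) := by
    have e1 : proj X That v = ∑ j ∈ U, l j • proj X That (X j) := by
      rw [← hvrep, map_sum]; simp_rw [map_smul]
    have e2 : v = ∑ j ∈ U, l j • (X j - proj X That (X j)) := by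
      calc v = v - proj X That v := by rw [hPTv, sub_zero]
      _ = ∑ j ∈ U, l j • X j - ∑ j ∈ U, l j • proj X That (X j) := by rw [e1, ← hvrep]
      _ = ∑ j ∈ U, (l j • X j - l j • proj X That (X j)) := by
          rw [Finset.sum_sub_distrib]
      _ = ∑ j ∈ U, l j • (X j - proj X That (X j)) := by simp_rw [smul_sub]
    rw [e2]
    refine (Finset.sum_subset Finset.sdiff_subset ?_).symm
    intro j hjU hjK
    have hjT : j ∈ That := by
      by_contra h; exact hjK (Finset.mem_sdiff.2 ⟨hjU, h⟩)
    rw [proj_eq_self (hXmem j hjT), sub_self, smul_zero]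
  -- w - t decomposition
  set w := ∑ j ∈ U \ That, l j • X j with hw
  set t := proj X That w with ht
  have h7' : v = w - t := by
    rw [h7, ht, hw, map_sum]
    simp_rw [map_smul, smul_sub]
    rw [Finset.sum_sub_distrib]
  obtain ⟨m, hmsupp, hmt⟩ := (Finsupp.mem_span_image_iff_linearCombination ℝ).1
    (proj_mem (X := X) That w)
  have hmsub : m.support ⊆ That := by exact_mod_cast (Finsupp.mem_supported ℝ _).1 hmsupp
  have htrep : ∑ j ∈ That, m j • X j = t := by
    rw [ht, ← hmt, Finsupp.linearCombination_apply, Finsupp.sum]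
    exact (Finset.sum_subset hmsub (fun j _ hj => by
      rw [Finsupp.notMem_support_iff.1 hj, zero_smul])).symm
  set cc : Fin p → ℝ := fun j => if j ∈ That then -(m j) else l j with hcc
  have hvc : ∑ j ∈ U, cc j • X j = v := by
    rw [← Finset.sum_sdiff hTU]
    have e1 : ∑ j ∈ U \ That, cc j • X j = w := by
      rw [hw]
      exact Finset.sum_congr rfl (fun j hj => by
        rw [hcc]; simp only [if_neg (Finset.mem_sdiff.1 hj).2])
    have e2 : ∑ j ∈ That, cc j • X j = -t := by
      rw [← htrep, ← Finset.sum_neg_distrib]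
      exact Finset.sum_congr rfl (fun j hj => by
        rw [hcc]; simp only [if_pos hj, neg_smul])
    rw [e1, e2, h7', sub_eq_add_neg]
  have hREv : (n:ℝ)*ν * ∑ j ∈ U, cc j ^2 ≤ ‖v‖^2 := by
    have := hRE U hUcard cc
    rwa [hvc] at this
  have hccsq : ∑ j ∈ U \ That, (l j)^2 ≤ ∑ j ∈ U, cc j ^2 := by
    rw [← Finset.sum_sdiff hTU]
    have e1 : ∑ j ∈ U \ That, cc j ^2 = ∑ j ∈ U \ That, (l j)^2 :=
      Finset.sum_congr rfl (fun j hj => by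
        rw [hcc]; simp only [if_neg (Finset.mem_sdiff.1 hj).2])
    have e2 : (0:ℝ) ≤ ∑ j ∈ That, cc j ^2 :=
      Finset.sum_nonneg (fun j _ => sq_nonneg _)
    linarith
  -- Cauchy-Schwarz and event E
  have h11 : ⟪v, ε⟫ = ∑ j ∈ U \ That, l j * ⟪X j - proj X That (X j), ε⟫ := by
    rw [h7, sum_inner]
    simp_rw [real_inner_smul_left]
  have hcs : ⟪v, ε⟫^2 ≤ (∑ j ∈ U \ That, (l j)^2)
      * (∑ j ∈ U \ That, ⟪X j - proj X That (X j), ε⟫^2) := by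
    rw [h11]; exact Finset.sum_mul_sq_le_sq_mul_sq _ _ _
  have hTlt : That.card < 6*s := by omega
  set k := ((U \ That).card : ℝ) with hk
  have hk0 : (0:ℝ) ≤ k := Nat.cast_nonneg _
  have hEsum : ∑ j ∈ U \ That, ⟪X j - proj X That (X j), ε⟫^2
      ≤ k * ((n:ℝ)*L*ν*Real.log p) := by
    rw [hk, ← nsmul_eq_mul]
    exact Finset.sum_le_card_nsmul _ _ _ (fun j hj =>
      hE That hTlt j (Finset.mem_sdiff.1 hj).2)
  have hA0 : (0:ℝ) ≤ ∑ j ∈ U \ That, (l j)^2 :=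
    Finset.sum_nonneg (fun j _ => sq_nonneg _)
  have hklog : (0:ℝ) ≤ k * L * Real.log p :=
    mul_nonneg (mul_nonneg hk0 hL.le) hlogp
  have hvε2 : ⟪v, ε⟫^2 ≤ ‖v‖^2 * (k * L * Real.log p) := by
    have s1 : ⟪v, ε⟫^2 ≤ (∑ j ∈ U \ That, (l j)^2) * (k * ((n:ℝ)*L*ν*Real.log p)) :=
      le_trans hcs (mul_le_mul_of_nonneg_left hEsum hA0)
    have s2 : (∑ j ∈ U \ That, (l j)^2) * (k * ((n:ℝ)*L*ν*Real.log p))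
        = ((n:ℝ)*ν * ∑ j ∈ U \ That, (l j)^2) * (k * L * Real.log p) := by ring
    have s3 : (n:ℝ)*ν * ∑ j ∈ U \ That, (l j)^2 ≤ ‖v‖^2 := by
      have hnν : (0:ℝ) ≤ (n:ℝ)*ν := mul_nonneg (Nat.cast_nonneg _) hν.le
      have := mul_le_mul_of_nonneg_left hccsq hnν
      linarith
    calc ⟪v, ε⟫^2 ≤ ((n:ℝ)*ν * ∑ j ∈ U \ That, (l j)^2) * (k * L * Real.log p) := by
          rw [← s2]; exact s1
    _ ≤ ‖v‖^2 * (k * L * Real.log p) := mul_le_mul_of_nonneg_right s3 hklog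
  have hvε : ⟪v, ε⟫ ≤ ‖v‖ * Real.sqrt (k * L * Real.log p) := by
    have : ⟪v, ε⟫ ≤ Real.sqrt (‖v‖^2 * (k * L * Real.log p)) := by
      calc ⟪v, ε⟫ ≤ |⟪v, ε⟫| := le_abs_self _
      _ = Real.sqrt (⟪v, ε⟫^2) := (Real.sqrt_sq_eq_abs _).symm
      _ ≤ Real.sqrt (‖v‖^2 * (k * L * Real.log p)) := Real.sqrt_le_sqrt hvε2
    rwa [Real.sqrt_mul (sq_nonneg _), Real.sqrt_sq (norm_nonneg _)] at this
  -- the Xθ part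
  set xb := ∑ j, θ j • X j with hxb
  have e2 : ⟪v, proj X That xb⟫ = 0 := by
    rw [← inner_proj_left That v xb, hPTv, inner_zero_left]
  have hcslog : (0:ℝ) ≤ c*(s:ℝ)*Real.log p :=
    mul_nonneg (mul_nonneg hc.le (Nat.cast_nonneg _)) hlogp
  have h13 : ⟪v, xb⟫ ≤ ‖v‖ * Real.sqrt (c*(s:ℝ)*Real.log p) := by
    have e3 : ⟪v, xb⟫ = ⟪v, xb - proj X That xb⟫ := by
      rw [inner_sub_right, e2, sub_zero]
    rw [e3]
    calc ⟪v, xb - proj X That xb⟫ ≤ ‖v‖ * ‖xb - proj X That xb‖ := real_inner_le_norm _ _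
    _ ≤ ‖v‖ * Real.sqrt (c*(s:ℝ)*Real.log p) := by
        refine mul_le_mul_of_nonneg_left ?_ (norm_nonneg v)
        have : ‖xb - proj X That xb‖ = Real.sqrt (‖xb - proj X That xb‖^2) :=
          (Real.sqrt_sq (norm_nonneg _)).symm
        rw [this]
        exact Real.sqrt_le_sqrt hThatrisk
  -- combine
  set M := Real.sqrt (c*(s:ℝ)*Real.log p) + Real.sqrt (k * L * Real.log p) with hM
  have hM0 : 0 ≤ M := add_nonneg (Real.sqrt_nonneg _) (Real.sqrt_nonneg _)
  have hvM : ‖v‖^2 ≤ ‖v‖ * M := by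
    have e4 : ‖v‖^2 = ⟪v, xb⟫ + ⟪v, ε⟫ := by
      rw [hvY, hY]; exact inner_add_right _ _ _
    rw [e4, hM, mul_add]
    exact add_le_add h13 hvε
  have hvle : ‖v‖ ≤ M := by
    rcases (norm_nonneg v).eq_or_lt with h0 | h0
    · rw [← h0]; exact hM0
    · refine le_of_mul_le_mul_left ?_ h0
      rw [← pow_two]; exact hvM
  have hvsq : ‖v‖^2 ≤ 2*(c*(s:ℝ)*Real.log p) + 2*(k * L * Real.log p) := by
    have h1 : ‖v‖^2 ≤ M^2 := pow_le_pow_left₀ (norm_nonneg v) hvle 2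
    have h2 : M^2 ≤ 2*(c*(s:ℝ)*Real.log p) + 2*(k * L * Real.log p) := by
      rw [hM]; exact sqrt_add_sq_le hcslog hklog
    linarith
  have hkS : k ≤ (S.card : ℝ) := by
    have : U \ That = S \ That := by rw [hU, Finset.union_sdiff_right]
    rw [hk, this]
    exact_mod_cast Finset.card_le_card Finset.sdiff_subset
  have hmono : ‖proj X S Y‖^2 ≤ ‖proj X U Y‖^2 :=
    pow_le_pow_left₀ (norm_nonneg _) (norm_proj_mono hSU Y) 2
  have hLlog : (0:ℝ) ≤ L * Real.log p := mul_nonneg hL.le hlogp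
  have hfin := mul_le_mul_of_nonneg_right hkS hLlog
  linarith [hmono, hsplit, hvsq, hfin]

lemma key1 {n p : ℕ} {X : Fin p → EuclideanSpace ℝ (Fin n)}
    {θ : Fin p → ℝ} {ε Y : EuclideanSpace ℝ (Fin n)} (hY : Y = (∑ j, θ j • X j) + ε)
    {c : ℝ} {s : ℕ}
    {That : Finset (Fin p)}
    (hThatrisk : ‖(∑ j, θ j • X j) - proj X That (∑ j, θ j • X j)‖^2 ≤ c*s*Real.log p)
    (hF : ‖ε‖^2 ≤ 2*n)
    {S : Finset (Fin p)} :
    ‖proj X S Y‖^2 ≤ ‖proj X That Y‖^2 + 2*(c*(s:ℝ)*Real.log p) + 4*n := by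
  set xb := ∑ j, θ j • X j with hxb
  have h1 : ‖proj X S Y‖^2 ≤ ‖Y‖^2 :=
    pow_le_pow_left₀ (norm_nonneg _) (norm_proj_le S Y) 2
  have h2 := pyth (X := X) That Y
  have h3 : Y - proj X That Y = (xb - proj X That xb) + (ε - proj X That ε) := by
    rw [hY, map_add]; abel
  have h4 : ‖ε - proj X That ε‖^2 ≤ ‖ε‖^2 := by
    have := pyth (X := X) That ε
    nlinarith [sq_nonneg ‖proj X That ε‖]
  have h5 : ‖Y - proj X That Y‖^2
      ≤ 2*‖xb - proj X That xb‖^2 + 2*‖ε - proj X That ε‖^2 := by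
    rw [h3]
    have h6 := norm_add_le (xb - proj X That xb) (ε - proj X That ε)
    have h7 := mul_self_le_mul_self (norm_nonneg ((xb - proj X That xb) + (ε - proj X That ε))) h6
    nlinarith [sq_nonneg (‖xb - proj X That xb‖ - ‖ε - proj X That ε‖)]
  linarith

/-- under events A_n, E_n, F_n, for every S,
log(π(S)/π(T̂)) ≤ −D(|S| − 2s*) log p + (4s* + 2c s* log p + 2|S| L log p)/β. -/
theorem stmt8 {n p s : ℕ} (hn : 0 < n) (hp : 2 ≤ p) (hs : 0 < s) (hsp : 6 * s ≤ p)
    (X : Fin p → EuclideanSpace ℝ (Fin n))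
    (hX : ∀ j, ‖X j‖ = Real.sqrt n)
    {ν : ℝ} (hν : 0 < ν) (hRE : RECond X ν (6 * s))
    (θ : Fin p → ℝ) (T : Finset (Fin p)) (hT : T = Finset.univ.filter fun j => θ j ≠ 0)
    (hTcard : T.card = s)
    (ε Y : EuclideanSpace ℝ (Fin n)) (hY : Y = (∑ j, θ j • X j) + ε)
    (β D c L : ℝ) (hβ : 0 < β) (hD : 0 < D) (hc : 0 < c) (hL : 0 < L)
    (That : Finset (Fin p)) (hThatcard : That.card ≤ 2 * s)
    (hThatrisk : ‖(∑ j, θ j • X j) - proj X That (∑ j, θ j • X j)‖ ^ 2 ≤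
      c * s * Real.log p)
    (hF : ‖ε‖ ^ 2 ≤ 2 * n)
    (hE : ∀ S : Finset (Fin p), S.card < 6 * s → ∀ j ∉ S,
      (inner ℝ (X j - proj X S (X j)) ε : ℝ) ^ 2 ≤ (n : ℝ) * L * ν * Real.log p)
    (S : Finset (Fin p)) :
    Real.log (postPi X Y β D s S / postPi X Y β D s That) ≤
      -D * ((S.card : ℝ) - 2 * s) * Real.log p +
        (4 * s + 2 * c * s * Real.log p + 2 * S.card * L * Real.log p) / β := by
  classical
  have hlogp : (0:ℝ) ≤ Real.log p :=
    Real.log_nonneg (by exact_mod_cast Nat.one_le_of_lt hp)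
  set eF : Finset (Fin p) → ℝ := fun S' =>
    ‖proj X S' Y‖ ^ 2 / β -
      (D * S'.card * Real.log p +
        2 * LinearMap.trace ℝ (EuclideanSpace ℝ (Fin n)) (proj X S') / β +
        if 4 * s < S'.card then 4 * (n:ℝ) / β else 0) with heF
  have hZ : 0 < ∑ S' : Finset (Fin p), postWt X Y β D s S' :=
    Finset.sum_pos (fun _ _ => Real.exp_pos _) ⟨∅, Finset.mem_univ _⟩
  have hlog : Real.log (postPi X Y β D s S / postPi X Y β D s That) = eF S - eF That := by
    have h1 : postPi X Y β D s S / postPi X Y β D s That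
        = postWt X Y β D s S / postWt X Y β D s That := by
      unfold postPi
      rw [div_div_div_comm, div_self hZ.ne', div_one]
    rw [h1]
    unfold postWt
    rw [← Real.exp_sub, Real.log_exp, heF]
  rw [hlog]
  -- trace facts
  have htrS : (0:ℝ) ≤ LinearMap.trace ℝ (EuclideanSpace ℝ (Fin n)) (proj X S) := by
    rw [trace_proj]; exact Nat.cast_nonneg _
  have htrT : LinearMap.trace ℝ (EuclideanSpace ℝ (Fin n)) (proj X That) ≤ 2*(s:ℝ) := by
    rw [trace_proj]
    have h1 : Module.finrank ℝ (colSpan X That) ≤ 2*s :=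
      le_trans (finrank_colSpan_le That) hThatcard
    exact_mod_cast h1
  have hindT : (if 4 * s < That.card then 4 * (n:ℝ) / β else 0) = 0 :=
    if_neg (by omega)
  have hcardT : (That.card : ℝ) ≤ 2*(s:ℝ) := by exact_mod_cast hThatcard
  -- key bound on projections
  have hkey : ‖proj X S Y‖ ^ 2 - ‖proj X That Y‖ ^ 2
      - (if 4 * s < S.card then 4 * (n:ℝ) else 0)
      ≤ 2*(c*(s:ℝ)*Real.log p) + 2*((S.card:ℝ)*(L*Real.log p)) := by
    by_cases hcase : 4 * s < S.card
    · rw [if_pos hcase]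
      have := key1 (X := X) hY hThatrisk hF (S := S)
      have hSL : (0:ℝ) ≤ 2*((S.card:ℝ)*(L*Real.log p)) :=
        mul_nonneg (by norm_num) (mul_nonneg (Nat.cast_nonneg _)
          (mul_nonneg hL.le hlogp))
      linarith
    · rw [if_neg hcase]
      have := key2 hν hn hp hRE hY hc hL hThatcard hThatrisk hE hs
        (S := S) (by omega)
      linarith
  -- assemble
  have hB : -(D * S.card * Real.log p) + D * That.card * Real.log p
      ≤ -D * ((S.card : ℝ) - 2 * s) * Real.log p := by
    have h1 : D * (That.card : ℝ) * Real.log p ≤ D * (2*(s:ℝ)) * Real.log p := by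
      have := mul_le_mul_of_nonneg_right
        (mul_le_mul_of_nonneg_left hcardT hD.le) hlogp
      linarith
    nlinarith
  have hC : 2 * LinearMap.trace ℝ (EuclideanSpace ℝ (Fin n)) (proj X That) / β
      - 2 * LinearMap.trace ℝ (EuclideanSpace ℝ (Fin n)) (proj X S) / β
      ≤ 4*(s:ℝ)/β := by
    have h1 : 2 * LinearMap.trace ℝ (EuclideanSpace ℝ (Fin n)) (proj X That)
        - 2 * LinearMap.trace ℝ (EuclideanSpace ℝ (Fin n)) (proj X S) ≤ 4*(s:ℝ) := by
      linarith
    calc 2 * LinearMap.trace ℝ (EuclideanSpace ℝ (Fin n)) (proj X That) / β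
        - 2 * LinearMap.trace ℝ (EuclideanSpace ℝ (Fin n)) (proj X S) / β
        = (2 * LinearMap.trace ℝ (EuclideanSpace ℝ (Fin n)) (proj X That)
          - 2 * LinearMap.trace ℝ (EuclideanSpace ℝ (Fin n)) (proj X S)) / β := by ring
    _ ≤ 4*(s:ℝ)/β := (div_le_div_iff_of_pos_right hβ).2 h1
  have hA : ‖proj X S Y‖ ^ 2 / β - ‖proj X That Y‖ ^ 2 / β
      - (if 4 * s < S.card then 4 * (n:ℝ) / β else 0)
      ≤ (2*(c*(s:ℝ)*Real.log p) + 2*((S.card:ℝ)*(L*Real.log p))) / β := by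
    have h1 := (div_le_div_iff_of_pos_right (c := β) hβ).2 hkey
    have h2 : (if 4 * s < S.card then 4 * (n:ℝ) / β else 0)
        = (if 4 * s < S.card then 4 * (n:ℝ) else 0) / β := by
      split <;> simp
    have h3 : ‖proj X S Y‖ ^ 2 / β - ‖proj X That Y‖ ^ 2 / β
        - (if 4 * s < S.card then 4 * (n:ℝ) else 0) / β
        = (‖proj X S Y‖ ^ 2 - ‖proj X That Y‖ ^ 2
          - (if 4 * s < S.card then 4 * (n:ℝ) else 0)) / β := by ring
    rw [h2, h3]
    exact h1
  have hsplit2 : (4*(s:ℝ) + 2*c*s*Real.log p + 2*(S.card:ℝ)*L*Real.log p)/β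
      = 4*(s:ℝ)/β + (2*(c*(s:ℝ)*Real.log p) + 2*((S.card:ℝ)*(L*Real.log p)))/β := by
    ring
  simp only [heF, hindT]
  linarith [hA, hB, hC, hsplit2]

end
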